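/- Let (X,G) be a Cantor dynamical system. If the full group [G] has many involutions (via the construction through group elements: every nonempty clopen set A contains a clopen V with g(V) ⊆ A, g(V) ∩ V = ∅ for some g ∈ G), then the topological full group [[G]] has many involutions: every nonempty regular open set contains the support of a nontrivial involution in [[G]]. -/

import Mathlib

open Set

variable {X : Type*} [TopologicalSpace X]

noncomputable instance Homeomorph.instGroup' : Group (X ≃ₜ X) where
  mul f g := g.trans f
  one := Homeomorph.refl X
  inv := Homeomorph.symm
  mul_assoc _ _ _ := Homeomorph.ext fun _ => rfl
  one_mul _ := Homeomorph.ext fun _ => rfl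
  mul_one _ := Homeomorph.ext fun _ => rfl
  inv_mul_cancel f := Homeomorph.ext fun x => f.symm_apply_apply x

@[simp] theorem Homeomorph.mul_apply' (f g : X ≃ₜ X) (x : X) : (f * g) x = f (g x) := rfl
@[simp] theorem Homeomorph.one_apply' (x : X) : (1 : X ≃ₜ X) x = x := rfl

/-- The support of a homeomorphism. -/
def spr (γ : X ≃ₜ X) : Set X := interior (closure {x | γ x ≠ x})

/-- The orbit of a point under a subgroup of homeomorphisms. -/
def orbitOf (G : Subgroup (X ≃ₜ X)) (x : X) : Set X := {y | ∃ g ∈ G, (g : X ≃ₜ X) x = y}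

/-- The full group of a Cantor dynamical system. -/
def fullGroup (G : Subgroup (X ≃ₜ X)) : Subgroup (X ≃ₜ X) where
  carrier := {γ | ∀ x, γ x ∈ orbitOf G x}
  one_mem' x := ⟨1, G.one_mem, rfl⟩
  mul_mem' {a b} ha hb x := by
    obtain ⟨h, hh, hbx⟩ := hb x
    obtain ⟨g, hg, hax⟩ := ha (b x)
    exact ⟨g * h, G.mul_mem hg hh, by simp only [Homeomorph.mul_apply'] at *; rw [hbx, hax]⟩
  inv_mem' {a} ha := by
    intro x
    obtain ⟨g, hg, hax⟩ := ha (a⁻¹ x)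
    refine ⟨g⁻¹, G.inv_mem hg, ?_⟩
    have : a (a⁻¹ x) = x := a.apply_symm_apply x
    rw [this] at hax
    have : (g⁻¹ : X ≃ₜ X) (g (a⁻¹ x)) = a⁻¹ x := g.symm_apply_apply _
    rw [hax] at this
    exact this


/-- The topological full group of a Cantor dynamical system. -/
def topFullSet (G : Subgroup (X ≃ₜ X)) : Set (X ≃ₜ X) :=
  {γ | γ ∈ fullGroup G ∧ ∃ (n : ℕ) (U : Fin n → Set X) (g : Fin n → X ≃ₜ X),
    (∀ i, IsClopen (U i)) ∧ (∀ i j, i ≠ j → U i ∩ U j = ∅) ∧ (⋃ i, U i) = Set.univ ∧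
    (∀ i, g i ∈ G) ∧ ∀ i, ∀ x ∈ U i, γ x = g i x}

/-- If the full group has many involutions via the clopen construction through group elements,
then so does the topological full group. -/
theorem topFullGroup_many_involutions {X : Type*} [TopologicalSpace X] [CompactSpace X] [TopologicalSpace.MetrizableSpace X] [TotallyDisconnectedSpace X] [PerfectSpace X] [Nonempty X]
    (G : Subgroup (X ≃ₜ X))
    (h : ∀ A : Set X, IsClopen A → A.Nonempty →
      ∃ V : Set X, ∃ g ∈ G, IsClopen V ∧ V.Nonempty ∧ V ⊆ A ∧
        (g : X ≃ₜ X) '' V ⊆ A ∧ ((g : X ≃ₜ X) '' V) ∩ V = ∅) :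
    ∀ A : Set X, A = interior (closure A) → A.Nonempty →
      ∃ π ∈ topFullSet G, π * π = 1 ∧ π ≠ 1 ∧ spr π ⊆ A := by
  classical
  intro A hA hAne
  have hAopen : IsOpen A := hA ▸ isOpen_interior
  obtain ⟨x₀, hx₀⟩ := hAne
  obtain ⟨B, hB, hx₀B, hBA⟩ :=
    (isTopologicalBasis_isClopen (X := X)).exists_subset_of_mem_open hx₀ hAopen
  obtain ⟨V, e, heG, hV, hVne, hVB, hWB, hdisj⟩ := h B hB ⟨x₀, hx₀B⟩
  set W : Set X := e '' V with hWdef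
  have hWclopen : IsClopen W :=
    ⟨e.isClosedMap V hV.isClosed, e.isOpenMap V hV.isOpen⟩
  have hWVempty : ∀ y, y ∈ W → y ∈ V → False := fun y h1 h2 =>
    Set.eq_empty_iff_forall_notMem.mp hdisj y ⟨h1, h2⟩
  let f : X → X := fun x => if x ∈ V then e x else if x ∈ W then e.symm x else x
  have hfV : ∀ x ∈ V, f x = e x := fun x hx => if_pos hx
  have hfW : ∀ x ∈ W, f x = e.symm x := fun x hx => by
    have hxV : x ∉ V := fun hc => hWVempty x hx hc
    simp only [f, if_neg hxV, if_pos hx]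
  have hfo : ∀ x, x ∉ V → x ∉ W → f x = x := fun x h1 h2 => by
    simp only [f, if_neg h1, if_neg h2]
  have hinv : Function.Involutive f := by
    intro x
    by_cases hxV : x ∈ V
    · have h1 : e x ∈ W := Set.mem_image_of_mem _ hxV
      rw [hfV x hxV, hfW _ h1, e.symm_apply_apply]
    · by_cases hxW : x ∈ W
      · obtain ⟨v, hv, rfl⟩ := hxW
        rw [hfW _ (Set.mem_image_of_mem _ hv), e.symm_apply_apply, hfV v hv]
      · rw [hfo x hxV hxW, hfo x hxV hxW]
  have hcont : Continuous f := by
    refine Continuous.if ?_ e.continuous ?_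
    · intro a ha
      have : frontier {x | x ∈ V} = ∅ := hV.frontier_eq
      rw [this] at ha; exact ha.elim
    · refine Continuous.if ?_ e.symm.continuous continuous_id
      intro a ha
      have : frontier {x | x ∈ W} = ∅ := hWclopen.frontier_eq
      rw [this] at ha; exact ha.elim
  let π : X ≃ₜ X :=
    { toEquiv := hinv.toPerm f
      continuous_toFun := hcont
      continuous_invFun := hcont }
  have hπ : ∀ x, π x = f x := fun x => rfl
  refine ⟨π, ⟨?_, 3, ![V, W, (V ∪ W)ᶜ], ![e, e⁻¹, 1], ?_, ?_, ?_, ?_, ?_⟩, ?_, ?_, ?_⟩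
  · -- fullGroup membership
    intro x
    by_cases hxV : x ∈ V
    · exact ⟨e, heG, (hπ x ▸ hfV x hxV).symm⟩
    · by_cases hxW : x ∈ W
      · exact ⟨e⁻¹, G.inv_mem heG, (hπ x ▸ hfW x hxW).symm⟩
      · exact ⟨1, G.one_mem, (hπ x ▸ hfo x hxV hxW).symm⟩
  · intro i
    fin_cases i
    · exact hV
    · exact hWclopen
    · exact (hV.union hWclopen).compl
  · have d01 : V ∩ W = ∅ := by rw [Set.inter_comm]; exact hdisj
    have d02 : V ∩ (V ∪ W)ᶜ = ∅ :=
      (disjoint_compl_right.mono_left Set.subset_union_left).inter_eq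
    have d20 : (V ∪ W)ᶜ ∩ V = ∅ :=
      (disjoint_compl_left.mono_right Set.subset_union_left).inter_eq
    have d12 : W ∩ (V ∪ W)ᶜ = ∅ :=
      (disjoint_compl_right.mono_left Set.subset_union_right).inter_eq
    have d21 : (V ∪ W)ᶜ ∩ W = ∅ :=
      (disjoint_compl_left.mono_right Set.subset_union_right).inter_eq
    intro i j hij
    fin_cases i <;> fin_cases j <;>
      first
        | exact absurd rfl hij
        | exact d01 | exact hdisj | exact d02 | exact d20 | exact d12 | exact d21
  · ext x
    simp only [Set.mem_iUnion, Set.mem_univ, iff_true]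
    by_cases hxV : x ∈ V
    · exact ⟨0, hxV⟩
    · by_cases hxW : x ∈ W
      · exact ⟨1, hxW⟩
      · exact ⟨2, fun hc => hc.elim hxV hxW⟩
  · intro i
    fin_cases i
    · exact heG
    · exact G.inv_mem heG
    · exact G.one_mem
  · intro i
    fin_cases i
    · intro x hx; rw [hπ x]; exact hfV x hx
    · intro x hx; rw [hπ x]; exact hfW x hx
    · intro x hx; rw [hπ x]
      have := hfo x (fun hc => hx (Or.inl hc)) (fun hc => hx (Or.inr hc))
      simpa using this
  · -- involution
    apply Homeomorph.ext
    intro x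
    show π (π x) = x
    rw [hπ, hπ]
    exact hinv x
  · -- nontrivial
    intro hc
    obtain ⟨v, hv⟩ := hVne
    have h1 : π v = v := by rw [hc]; rfl
    rw [hπ, hfV v hv] at h1
    exact hWVempty v (h1 ▸ Set.mem_image_of_mem _ hv) hv
  · -- support
    have hsub : {x | π x ≠ x} ⊆ V ∪ W := by
      intro x hx
      by_contra hc
      exact hx (hπ x ▸ hfo x (fun h1 => hc (Or.inl h1)) (fun h1 => hc (Or.inr h1)))
    have h2 : closure {x | π x ≠ x} ⊆ V ∪ W :=
      closure_minimal hsub (hV.union hWclopen).isClosed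
    refine subset_trans (subset_trans interior_subset h2) ?_
    intro x hx
    rcases hx with hx | hx
    · exact hBA (hVB hx)
    · exact hBA (hWB hx)
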